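/- Let q ≥ 1 and ℓ a positive integer coprime to q, and n an integer with gcd(n, q) = 1. For Re(ξ) < 0 one has the Ramanujan expansion σ_ξ(n) = ζ^q(1 − ξ) ∑_{ℓ ≥ 1, gcd(ℓ,q)=1} ℓ^{ξ−1} r_ℓ(n), where ζ^q denotes the Riemann zeta function with Euler factors at primes dividing q removed. -/

import Mathlib

/-- e(x) = exp(2πix). -/
noncomputable def eC (x : ℂ) : ℂ := Complex.exp (2 * Real.pi * Complex.I * x)

/-- The generalized divisor function with complex exponent. -/
noncomputable def sigmaC (w : ℂ) (m : ℕ) : ℂ := ∑ d ∈ m.divisors, (d : ℂ) ^ w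

/-- The Ramanujan sum r_c(n) = ∑_{x mod c, gcd(x,c)=1} e(xn/c). -/
noncomputable def ramanujanSum (c : ℕ) (n : ℕ) : ℂ :=
  ∑ x ∈ (Finset.range c).filter (fun x => Nat.Coprime x c), eC ((x : ℂ) * (n : ℂ) / (c : ℂ))

/-- ζ^q(s): the Riemann zeta function with the Euler factors at primes dividing q removed. -/
noncomputable def zetaQ (q : ℕ) (s : ℂ) : ℂ :=
  riemannZeta s * ∏ p ∈ q.primeFactors, (1 - (p : ℂ) ^ (-s))

open ArithmeticFunction ArithmeticFunction.Moebius Finset LSeries.notation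

open Complex in
lemma sum_eC (c m : ℕ) (hc : 0 < c) :
    ∑ x ∈ Finset.range c, eC ((x : ℂ) * m / c) = if c ∣ m then (c : ℂ) else 0 := by
  have hc0 : (c : ℂ) ≠ 0 := Nat.cast_ne_zero.mpr hc.ne'
  set z : ℂ := Complex.exp (2 * Real.pi * Complex.I * (m / c)) with hz
  have hzx : ∀ x : ℕ, eC ((x : ℂ) * m / c) = z ^ x := by
    intro x
    rw [hz, ← Complex.exp_nat_mul, eC]
    ring_nf
  have hzc : z ^ c = 1 := by
    rw [hz, ← Complex.exp_nat_mul]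
    have : (c : ℂ) * (2 * Real.pi * Complex.I * (m / c)) = (m : ℂ) * (2 * Real.pi * Complex.I) := by
      field_simp
    rw [this]
    exact_mod_cast Complex.exp_int_mul_two_pi_mul_I m
  simp only [hzx]
  by_cases hdvd : c ∣ m
  · obtain ⟨k, rfl⟩ := hdvd
    have : z = 1 := by
      rw [hz]
      have : 2 * (Real.pi : ℂ) * Complex.I * ((c * k : ℕ) / c) = (k : ℂ) * (2 * Real.pi * Complex.I) := by
        push_cast; field_simp
      rw [this]
      exact_mod_cast Complex.exp_int_mul_two_pi_mul_I k
    simp [this]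
  · have hz1 : z ≠ 1 := by
      intro h
      rw [hz, Complex.exp_eq_one_iff] at h
      obtain ⟨k, hk⟩ := h
      apply hdvd
      have h2 : (2 * (Real.pi:ℂ) * Complex.I) ≠ 0 := by
        simp [Real.pi_ne_zero, Complex.I_ne_zero]
      have hmc : (m : ℂ) / c = k := by
        apply mul_left_cancel₀ h2
        rw [hk]; ring
      have hmck : (m : ℂ) = c * k := by
        rw [← hmc]; field_simp
      have : (m : ℤ) = c * k := by exact_mod_cast hmck
      exact Int.ofNat_dvd.mp ⟨k, this⟩
    rw [geom_sum_eq hz1, hzc]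
    simp [hdvd]

open ArithmeticFunction Finset in
lemma sum_divisors_moebius' (m : ℕ) :
    ∑ d ∈ m.divisors, ((μ d : ℤ) : ℂ) = if m = 1 then 1 else 0 := by
  have := congrArg (fun f : ArithmeticFunction ℤ => f m) moebius_mul_coe_zeta
  simp only [coe_mul_zeta_apply, one_apply] at this
  have := congrArg (fun z : ℤ => (z : ℂ)) this
  push_cast at this
  simpa using this

open ArithmeticFunction Finset in
lemma ramanujanSum_eq (c n : ℕ) (hc : 0 < c) (hn : 0 < n) :
    ramanujanSum c n = ∑ e ∈ n.divisors, if e ∣ c then ((μ (c/e) : ℤ) : ℂ) * e else 0 := by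
  have hc0 : (c : ℕ) ≠ 0 := hc.ne'
  -- step 1: indicator
  have hind : ∀ x : ℕ, (if Nat.Coprime x c then (1:ℂ) else 0)
      = ∑ d ∈ c.divisors, (if d ∣ x then ((μ d : ℤ) : ℂ) else 0) := by
    intro x
    rw [← Finset.sum_filter]
    have hset : c.divisors.filter (· ∣ x) = (Nat.gcd x c).divisors := by
      ext d
      simp only [mem_filter, Nat.mem_divisors, Nat.dvd_gcd_iff]
      constructor
      · rintro ⟨⟨h1, -⟩, h2⟩
        exact ⟨⟨h2, h1⟩, Nat.gcd_ne_zero_right hc0⟩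
      · rintro ⟨⟨h1, h2⟩, -⟩
        exact ⟨⟨h2, hc0⟩, h1⟩
    rw [hset, sum_divisors_moebius']
  rw [ramanujanSum]
  rw [Finset.sum_filter]
  have : ∀ x ∈ Finset.range c, (if Nat.Coprime x c then eC ((x:ℂ)*n/c) else 0)
      = ∑ d ∈ c.divisors, (if d ∣ x then ((μ d : ℤ) : ℂ) else 0) * eC ((x:ℂ)*n/c) := by
    intro x _
    rw [← Finset.sum_mul, ← hind x]
    split <;> simp
  rw [Finset.sum_congr rfl this, Finset.sum_comm]
  -- step 3 : inner sums
  have hinner : ∀ d ∈ c.divisors,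
      ∑ x ∈ Finset.range c, (if d ∣ x then ((μ d : ℤ) : ℂ) else 0) * eC ((x:ℂ)*n/c)
      = ((μ d : ℤ) : ℂ) * (if (c/d) ∣ n then ((c/d : ℕ) : ℂ) else 0) := by
    intro d hd
    obtain ⟨hdc, -⟩ := Nat.mem_divisors.mp hd
    have hd0 : 0 < d := Nat.pos_of_mem_divisors hd
    have hcd0 : 0 < c / d := Nat.div_pos (Nat.le_of_dvd hc hdc) hd0
    have hd0' : (d : ℂ) ≠ 0 := Nat.cast_ne_zero.mpr hd0.ne'
    have hc0' : (c : ℂ) ≠ 0 := Nat.cast_ne_zero.mpr hc0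
    calc ∑ x ∈ Finset.range c, (if d ∣ x then ((μ d : ℤ) : ℂ) else 0) * eC ((x:ℂ)*n/c)
        = ∑ x ∈ Finset.range c, (if d ∣ x then ((μ d : ℤ) : ℂ) * eC ((x:ℂ)*n/c) else 0) := by
          simp [ite_mul]
      _ = ∑ x ∈ (Finset.range c).filter (fun x => d ∣ x), ((μ d : ℤ) : ℂ) * eC ((x:ℂ)*n/c) :=
          (Finset.sum_filter _ _).symm
      _ = ((μ d : ℤ) : ℂ) * ∑ x ∈ (Finset.range c).filter (fun x => d ∣ x), eC ((x:ℂ)*n/c) :=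
          by rw [Finset.mul_sum]
      _ = ((μ d : ℤ) : ℂ) * (if (c/d) ∣ n then ((c/d : ℕ) : ℂ) else 0) := ?_
    rw [← sum_eC (c/d) n hcd0]
    congr 1
    refine Finset.sum_nbij' (fun x => x / d) (fun y => d * y) ?_ ?_ ?_ ?_ ?_
    · intro x hx
      simp only [mem_filter, Finset.mem_range] at hx ⊢
      exact Nat.div_lt_div_of_lt_of_dvd (by simpa using hdc) hx.1
    · intro y hy
      simp only [Finset.mem_range, mem_filter] at hy ⊢
      refine ⟨?_, Dvd.intro y rfl⟩
      calc d * y < d * (c/d) := mul_lt_mul_of_pos_left hy hd0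
        _ = c := Nat.mul_div_cancel' hdc
    · intro x hx
      simp only [mem_filter] at hx
      exact Nat.mul_div_cancel' hx.2
    · intro y _
      exact Nat.mul_div_cancel_left y hd0
    · intro x hx
      simp only [mem_filter, Finset.mem_range] at hx
      obtain ⟨hxc, hdx⟩ := hx
      have harg : ((x/d : ℕ) : ℂ) * n / ((c/d : ℕ) : ℂ) = (x : ℂ) * n / c := by
        rw [Nat.cast_div hdx hd0', Nat.cast_div hdc hd0']
        field_simp
      exact (congrArg eC harg).symm
  rw [Finset.sum_congr rfl hinner]
  -- step 5: reindex d ↦ c / d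
  have hre := Nat.sum_div_divisors (α := ℂ) c
    (fun e => ((μ (c/e) : ℤ) : ℂ) * (if e ∣ n then (e : ℂ) else 0))
  have hstep : ∀ d ∈ c.divisors, ((μ d : ℤ) : ℂ) * (if (c/d) ∣ n then ((c/d : ℕ) : ℂ) else 0)
      = ((μ (c/(c/d)) : ℤ) : ℂ) * (if (c/d) ∣ n then ((c/d : ℕ) : ℂ) else 0) := by
    intro d hd
    rw [Nat.div_div_self (Nat.mem_divisors.mp hd).1 hc0]
  rw [Finset.sum_congr rfl hstep, hre]
  -- step 6: change to sum over n.divisors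
  have lhs_eq : ∑ e ∈ c.divisors, ((μ (c/e) : ℤ) : ℂ) * (if e ∣ n then (e:ℂ) else 0)
      = ∑ e ∈ c.divisors.filter (· ∣ n), ((μ (c/e) : ℤ) : ℂ) * e := by
    rw [Finset.sum_filter]
    exact Finset.sum_congr rfl fun e _ => by split <;> simp
  have rhs_eq : ∑ e ∈ n.divisors, (if e ∣ c then ((μ (c/e) : ℤ) : ℂ) * e else 0)
      = ∑ e ∈ n.divisors.filter (· ∣ c), ((μ (c/e) : ℤ) : ℂ) * e :=
    (Finset.sum_filter (fun e => e ∣ c) (fun e => ((μ (c/e) : ℤ) : ℂ) * e)).symm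
  have hsets : c.divisors.filter (· ∣ n) = n.divisors.filter (· ∣ c) := by
    ext e
    simp only [Finset.mem_filter, Nat.mem_divisors, hc0, hn.ne', ne_eq, not_false_eq_true,
      and_true]
    tauto
  rw [lhs_eq, rhs_eq, hsets]


open ArithmeticFunction Finset in
lemma natCast_prod_cpow (t : Finset ℕ) (w : ℂ) :
    ((∏ p ∈ t, p : ℕ) : ℂ) ^ w = ∏ p ∈ t, (p : ℂ) ^ w := by
  classical
  induction t using Finset.induction with
  | empty => simp
  | insert a s h ih =>
    rw [Finset.prod_insert h, Finset.prod_insert h, Nat.cast_mul,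
      Complex.natCast_mul_natCast_cpow, ih]

open ArithmeticFunction Finset in
lemma euler_factor (q : ℕ) (hq : q ≠ 0) (s : ℂ) :
    ∑ a ∈ q.divisors, ((μ a : ℤ) : ℂ) * (a : ℂ) ^ (-s)
      = ∏ p ∈ q.primeFactors, (1 - (p : ℂ) ^ (-s)) := by
  classical
  have h1 : ∑ a ∈ q.divisors with Squarefree a, ((μ a : ℤ) : ℂ) * (a:ℂ)^(-s)
      = ∑ a ∈ q.divisors, ((μ a : ℤ):ℂ) * (a:ℂ)^(-s) := by
    refine Finset.sum_subset (Finset.filter_subset _ _) ?_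
    intro a ha hna
    rw [Finset.mem_filter, not_and] at hna
    rw [moebius_eq_zero_of_not_squarefree (hna ha)]
    simp
  rw [← h1, Nat.sum_divisors_filter_squarefree hq]
  have hfin : (UniqueFactorizationMonoid.normalizedFactors q).toFinset = q.primeFactors := by
    rw [Nat.factors_eq]; exact Nat.toFinset_factors q
  rw [hfin]
  have hterm : ∀ t ∈ q.primeFactors.powerset,
      ((μ (t.val.prod) : ℤ) : ℂ) * ((t.val.prod : ℕ) : ℂ)^(-s)
        = ∏ p ∈ t, (-(p : ℂ)^(-s)) := by
    intro t ht
    rw [Finset.mem_powerset] at ht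
    have hprod : t.val.prod = ∏ p ∈ t, p := by rw [Finset.prod_val]; rfl
    rw [hprod]
    rw [IsMultiplicative.map_prod_of_subset_primeFactors isMultiplicative_moebius q t ht]
    have : ∀ p ∈ t, (μ p : ℤ) = -1 := fun p hp =>
      moebius_apply_prime (Nat.prime_of_mem_primeFactors (ht hp))
    rw [natCast_prod_cpow]
    push_cast
    rw [← Finset.prod_mul_distrib]
    refine Finset.prod_congr rfl fun p hp => ?_
    rw [this p hp]
    push_cast
    ring
  rw [Finset.sum_congr rfl hterm]
  calc ∑ t ∈ q.primeFactors.powerset, ∏ p ∈ t, (-(p:ℂ)^(-s))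
      = ∑ t ∈ q.primeFactors.powerset,
          (∏ p ∈ t, (-(p:ℂ)^(-s))) * ∏ p ∈ q.primeFactors \ t, (1:ℂ) := by simp
    _ = ∏ p ∈ q.primeFactors, ((-(p:ℂ)^(-s)) + 1) :=
        (Finset.prod_add (ι := ℕ) (fun p => -(p:ℂ)^(-s)) (fun _ => (1:ℂ)) q.primeFactors).symm
    _ = ∏ p ∈ q.primeFactors, (1 - (p:ℂ)^(-s)) := Finset.prod_congr rfl (fun p _ => by ring)

noncomputable def fmu (q : ℕ) : ℕ → ℂ :=
  fun m => if Nat.Coprime m q then ((μ m : ℤ) : ℂ) else 0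

noncomputable def gone (q : ℕ) : ℕ → ℂ := fun m => if Nat.Coprime m q then 1 else 0

noncomputable def hqf (q : ℕ) : ℕ → ℂ := fun a => if a ∣ q then ((μ a : ℤ) : ℂ) else 0

lemma norm_mu_le (m : ℕ) : ‖((μ m : ℤ) : ℂ)‖ ≤ 1 := by
  have h : |μ m| ≤ 1 := by rw [abs_moebius]; split <;> norm_num
  rw [Complex.norm_intCast]
  exact_mod_cast h

lemma fmu_summable (q : ℕ) {s : ℂ} (hs : 1 < s.re) : LSeriesSummable (fmu q) s := by
  refine LSeriesSummable_of_bounded_of_one_lt_re (m := 1) (fun n _ => ?_) hs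
  unfold fmu
  split
  · exact norm_mu_le n
  · simp

lemma gone_summable (q : ℕ) {s : ℂ} (hs : 1 < s.re) : LSeriesSummable (gone q) s := by
  refine LSeriesSummable_of_bounded_of_one_lt_re (m := 1) (fun n _ => ?_) hs
  unfold gone
  split <;> simp

lemma hqf_summable (q : ℕ) {s : ℂ} (hs : 1 < s.re) : LSeriesSummable (hqf q) s := by
  refine LSeriesSummable_of_bounded_of_one_lt_re (m := 1) (fun n _ => ?_) hs
  unfold hqf
  split
  · exact norm_mu_le n
  · simp

lemma filter_divisors_gcd {c x : ℕ} (hc : c ≠ 0) :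
    c.divisors.filter (· ∣ x) = (Nat.gcd x c).divisors := by
  ext d
  simp only [mem_filter, Nat.mem_divisors, Nat.dvd_gcd_iff]
  constructor
  · rintro ⟨⟨h1, -⟩, h2⟩
    exact ⟨⟨h2, h1⟩, Nat.gcd_ne_zero_right hc⟩
  · rintro ⟨⟨h1, h2⟩, -⟩
    exact ⟨⟨h2, hc⟩, h1⟩

lemma conv_eq_delta (q : ℕ) (hq0 : q ≠ 0) : gone q ⍟ fmu q = LSeries.delta := by
  funext m
  rw [LSeries.convolution_def]
  show ∑ p ∈ m.divisorsAntidiagonal, gone q p.1 * fmu q p.2 = LSeries.delta m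
  rcases eq_or_ne m 0 with rfl | hm
  · simp [LSeries.delta]
  by_cases hcop : Nat.Coprime m q
  · have hterm : ∀ p ∈ m.divisorsAntidiagonal, gone q p.1 * fmu q p.2 = ((μ p.2 : ℤ) : ℂ) := by
      intro p hp
      obtain ⟨hmul, -⟩ := Nat.mem_divisorsAntidiagonal.mp hp
      have hd1 : p.1 ∣ m := ⟨p.2, hmul.symm⟩
      have hd2 : p.2 ∣ m := ⟨p.1, by rw [← hmul, mul_comm]⟩
      have h1 : Nat.Coprime p.1 q := Nat.Coprime.coprime_dvd_left hd1 hcop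
      have h2 : Nat.Coprime p.2 q := Nat.Coprime.coprime_dvd_left hd2 hcop
      simp only [gone, fmu, if_pos h1, if_pos h2, one_mul]
    rw [Finset.sum_congr rfl hterm]
    have hre := Nat.sum_divisorsAntidiagonal' (n := m) (f := fun _ e => ((μ e : ℤ) : ℂ))
    rw [hre, sum_divisors_moebius']
    simp [LSeries.delta]
  · have hterm : ∀ p ∈ m.divisorsAntidiagonal, gone q p.1 * fmu q p.2 = 0 := by
      intro p hp
      obtain ⟨hmul, -⟩ := Nat.mem_divisorsAntidiagonal.mp hp
      by_cases h1 : Nat.Coprime p.1 q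
      · by_cases h2 : Nat.Coprime p.2 q
        · exact absurd (hmul ▸ Nat.Coprime.mul h1 h2) hcop
        · simp [fmu, h2]
      · simp [gone, h1]
    rw [Finset.sum_congr rfl hterm]
    have : m ≠ 1 := fun h => hcop (h ▸ Nat.coprime_one_left q)
    simp [LSeries.delta, this]

lemma one_conv_hqf (q : ℕ) (hq0 : q ≠ 0) {m : ℕ} (hm : m ≠ 0) :
    ((1 : ℕ → ℂ) ⍟ hqf q) m = gone q m := by
  rw [LSeries.convolution_def]
  show ∑ p ∈ m.divisorsAntidiagonal, (1 : ℕ → ℂ) p.1 * hqf q p.2 = gone q m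
  have hterm : ∀ p ∈ m.divisorsAntidiagonal, (1 : ℕ → ℂ) p.1 * hqf q p.2 = hqf q p.2 := by
    intro p _; simp
  rw [Finset.sum_congr rfl hterm]
  have hre := Nat.sum_divisorsAntidiagonal' (n := m) (f := fun _ e => hqf q e)
  rw [hre]
  have : ∑ d ∈ m.divisors, hqf q d
      = ∑ d ∈ m.divisors.filter (· ∣ q), ((μ d : ℤ) : ℂ) := by
    rw [Finset.sum_filter]; rfl
  rw [this, filter_divisors_gcd hm, sum_divisors_moebius']
  unfold gone
  have heq : Nat.gcd q m = 1 ↔ Nat.Coprime m q := by unfold Nat.Coprime; rw [Nat.gcd_comm]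
  simp only [heq]

lemma LSeries_hqf (q : ℕ) (hq0 : q ≠ 0) (s : ℂ) :
    LSeries (hqf q) s = ∏ p ∈ q.primeFactors, (1 - (p:ℂ)^(-s)) := by
  rw [LSeries]
  rw [tsum_eq_sum (s := q.divisors) ?_]
  · rw [← euler_factor q hq0 s]
    refine Finset.sum_congr rfl fun a ha => ?_
    have ha0 : a ≠ 0 := (Nat.pos_of_mem_divisors ha).ne'
    rw [LSeries.term_of_ne_zero ha0]
    unfold hqf
    rw [if_pos (Nat.mem_divisors.mp ha).1, Complex.cpow_neg, div_eq_mul_inv]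
  · intro a ha
    rcases eq_or_ne a 0 with rfl|h0
    · simp
    · rw [LSeries.term_of_ne_zero h0]
      have : ¬ a ∣ q := fun hdvd => ha (Nat.mem_divisors.mpr ⟨hdvd, hq0⟩)
      simp [hqf, this]

lemma LSeries_gone (q : ℕ) (hq0 : q ≠ 0) {s : ℂ} (hs : 1 < s.re) :
    LSeries (gone q) s = zetaQ q s := by
  have h1 : LSeries (gone q) s = LSeries ((1 : ℕ → ℂ) ⍟ hqf q) s :=
    LSeries_congr (fun hn => (one_conv_hqf q hq0 hn).symm) s
  rw [h1, LSeries_convolution' (LSeriesSummable_one_iff.mpr hs) (hqf_summable q hs),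
    LSeries_one_eq_riemannZeta hs, LSeries_hqf q hq0 s, zetaQ]

lemma zetaQ_mul_fmu (q : ℕ) (hq0 : q ≠ 0) {s : ℂ} (hs : 1 < s.re) :
    zetaQ q s * LSeries (fmu q) s = 1 := by
  rw [← LSeries_gone q hq0 hs, ← LSeries_convolution' (gone_summable q hs) (fmu_summable q hs),
    conv_eq_delta q hq0, LSeries_delta]
  rfl


/-- The Ramanujan expansion (3.7) of the divisor function. -/
theorem ramanujan_expansion (q n : ℕ) (hq : 0 < q) (hn : 0 < n)
    (hcop : Nat.Coprime n q) (ξ : ℂ) (hξ : ξ.re < 0) :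
    sigmaC ξ n =
      zetaQ q (1 - ξ) *
        ∑' ℓ : ℕ, if 1 ≤ ℓ ∧ Nat.Coprime ℓ q then (ℓ : ℂ) ^ (ξ - 1) * ramanujanSum ℓ n
          else 0 := by
  classical
  set s : ℂ := 1 - ξ with hsdef
  have hs : 1 < s.re := by
    simp only [hsdef, Complex.sub_re, Complex.one_re]
    linarith
  set F : ℕ → ℕ → ℂ := fun d ℓ =>
    if d ∣ ℓ ∧ 1 ≤ ℓ ∧ Nat.Coprime ℓ q
      then (ℓ : ℂ) ^ (ξ - 1) * ((μ (ℓ/d) : ℤ) : ℂ) * d else 0 with hF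
  -- Step A: termwise identity
  have hA : ∀ ℓ : ℕ, (if 1 ≤ ℓ ∧ Nat.Coprime ℓ q then (ℓ : ℂ) ^ (ξ - 1) * ramanujanSum ℓ n
      else 0) = ∑ d ∈ n.divisors, F d ℓ := by
    intro ℓ
    by_cases h : 1 ≤ ℓ ∧ Nat.Coprime ℓ q
    · rw [if_pos h, ramanujanSum_eq ℓ n h.1 hn, Finset.mul_sum]
      refine Finset.sum_congr rfl fun d hd => ?_
      by_cases hdl : d ∣ ℓ
      · rw [if_pos hdl, hF]
        simp only
        rw [if_pos ⟨hdl, h⟩]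
        ring
      · rw [if_neg hdl, hF]
        simp only
        rw [if_neg (by tauto), mul_zero]
    · rw [if_neg h]
      symm
      refine Finset.sum_eq_zero fun d _ => ?_
      rw [hF]; simp only; rw [if_neg (by tauto)]
  -- Step B: summability of each F d
  have hB : ∀ d ∈ n.divisors, Summable (F d) := by
    intro d hd
    have hsum : Summable (fun ℓ : ℕ => (d:ℝ) * (ℓ:ℝ)^(ξ.re - 1)) :=
      (Real.summable_nat_rpow.mpr (by linarith)).mul_left _
    refine Summable.of_norm_bounded hsum fun ℓ => ?_
    rw [hF]; simp only
    split
    · rename_i hcond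
      have hl0 : 0 < ℓ := hcond.2.1
      rw [norm_mul, norm_mul, Complex.norm_natCast_cpow_of_pos hl0]
      have h1 : ((ξ : ℂ) - 1).re = ξ.re - 1 := by simp [Complex.sub_re]
      rw [h1]
      have h2 : ‖((μ (ℓ/d) : ℤ) : ℂ)‖ ≤ 1 := norm_mu_le _
      have h3 : ‖((d:ℕ) : ℂ)‖ = (d:ℝ) := by simp
      rw [h3]
      calc (ℓ:ℝ)^(ξ.re - 1) * ‖((μ (ℓ/d) : ℤ) : ℂ)‖ * d
          ≤ (ℓ:ℝ)^(ξ.re - 1) * 1 * d := by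
            have := Real.rpow_nonneg (x := (ℓ:ℝ)) (Nat.cast_nonneg ℓ) (ξ.re - 1)
            apply mul_le_mul_of_nonneg_right (mul_le_mul_of_nonneg_left h2 this)
              (Nat.cast_nonneg d)
        _ = d * (ℓ:ℝ)^(ξ.re-1) := by ring
    · rw [norm_zero]
      positivity
  -- Step C
  have hC : ∀ d ∈ n.divisors, ∑' ℓ, F d ℓ = (d:ℂ)^ξ * LSeries (fmu q) s := by
    intro d hd
    have hdn : d ∣ n := (Nat.mem_divisors.mp hd).1
    have hd1 : 0 < d := Nat.pos_of_mem_divisors hd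
    have hd0' : (d:ℂ) ≠ 0 := Nat.cast_ne_zero.mpr hd1.ne'
    have hdq : Nat.Coprime d q := Nat.Coprime.coprime_dvd_left hdn hcop
    have hinj : Function.Injective (fun m : ℕ => d * m) :=
      fun a b h => Nat.eq_of_mul_eq_mul_left hd1 h
    have hsupp : Function.support (F d) ⊆ Set.range (fun m : ℕ => d * m) := by
      intro x hx
      rw [Function.mem_support, hF] at hx
      simp only at hx
      by_cases hc : d ∣ x ∧ 1 ≤ x ∧ Nat.Coprime x q
      · obtain ⟨⟨k, rfl⟩, -⟩ := hc
        exact ⟨k, rfl⟩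
      · exact absurd (if_neg hc) hx
    rw [← Function.Injective.tsum_eq hinj hsupp]
    have hterm : ∀ m : ℕ, F d (d * m) = (d:ℂ)^ξ * LSeries.term (fmu q) s m := by
      intro m
      rcases eq_or_ne m 0 with rfl | hm
      · rw [hF]; simp only
        rw [if_neg (by simp), LSeries.term_zero, mul_zero]
      · have hm1 : 0 < m := Nat.pos_of_ne_zero hm
        have hdm1 : 1 ≤ d * m := Nat.mul_pos hd1 hm1
        have hcopiff : Nat.Coprime (d * m) q ↔ Nat.Coprime m q := by
          rw [Nat.coprime_mul_iff_left]
          exact ⟨fun h => h.2, fun h => ⟨hdq, h⟩⟩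
        have hmu : (d * m) / d = m := Nat.mul_div_cancel_left m hd1
        rw [hF]; simp only
        rw [LSeries.term_of_ne_zero hm]
        by_cases hcm : Nat.Coprime m q
        · rw [if_pos ⟨dvd_mul_right d m, hdm1, hcopiff.mpr hcm⟩, hmu]
          unfold fmu
          rw [if_pos hcm]
          have hc1 : ((d * m : ℕ) : ℂ) ^ (ξ - 1) = (d:ℂ)^(ξ-1) * (m:ℂ)^(ξ-1) := by
            rw [Nat.cast_mul]
            exact Complex.natCast_mul_natCast_cpow d m (ξ - 1)
          have hc2 : (d:ℂ)^(ξ-1) * (d:ℂ) = (d:ℂ)^ξ := by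
            have : (d:ℂ)^ξ = (d:ℂ)^((ξ-1)+1) := by ring_nf
            rw [this, Complex.cpow_add _ _ hd0', Complex.cpow_one]
          have hc3 : (m:ℂ)^(ξ-1) = ((m:ℂ)^s)⁻¹ := by
            rw [hsdef, ← Complex.cpow_neg]
            ring_nf
          rw [hc1, hc3]
          rw [div_eq_mul_inv]
          calc (d:ℂ)^(ξ-1) * ((m:ℂ)^s)⁻¹ * ((μ m : ℤ):ℂ) * d
              = ((d:ℂ)^(ξ-1) * (d:ℂ)) * (((μ m : ℤ):ℂ) * ((m:ℂ)^s)⁻¹) := by ring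
            _ = (d:ℂ)^ξ * (((μ m : ℤ):ℂ) * ((m:ℂ)^s)⁻¹) := by rw [hc2]
        · rw [if_neg (by rw [hcopiff] at *; tauto)]
          unfold fmu
          rw [if_neg hcm]
          simp
    calc ∑' m, F d (d * m) = ∑' m, (d:ℂ)^ξ * LSeries.term (fmu q) s m := by
          exact tsum_congr hterm
      _ = (d:ℂ)^ξ * LSeries (fmu q) s := by rw [tsum_mul_left]; rfl
  -- Step D: assemble
  have hT : (∑' ℓ : ℕ, if 1 ≤ ℓ ∧ Nat.Coprime ℓ q then (ℓ : ℂ) ^ (ξ - 1) * ramanujanSum ℓ n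
      else 0) = sigmaC ξ n * LSeries (fmu q) s := by
    calc (∑' ℓ : ℕ, if 1 ≤ ℓ ∧ Nat.Coprime ℓ q then (ℓ : ℂ) ^ (ξ - 1) * ramanujanSum ℓ n
        else 0) = ∑' ℓ, ∑ d ∈ n.divisors, F d ℓ := tsum_congr hA
      _ = ∑ d ∈ n.divisors, ∑' ℓ, F d ℓ := Summable.tsum_finsetSum hB
      _ = ∑ d ∈ n.divisors, (d:ℂ)^ξ * LSeries (fmu q) s := Finset.sum_congr rfl hC
      _ = sigmaC ξ n * LSeries (fmu q) s := by rw [sigmaC, Finset.sum_mul]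
  rw [hT]
  calc sigmaC ξ n = sigmaC ξ n * (zetaQ q s * LSeries (fmu q) s) := by
        rw [zetaQ_mul_fmu q hq.ne' hs, mul_one]
    _ = zetaQ q s * (sigmaC ξ n * LSeries (fmu q) s) := by ring
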